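/- If F ⊆ X̃ is a closed invariant subset (σ̃ᵢ(F) ⊆ F for all i) that is also robust and τ-invariant, and F is defined with F_k = τ^k(F), then each F_k is robust and satisfies F_k = ⋃_{i=1}^n σ̃ᵢ(F_{k+1}) and F_{k+1} = τ(F_k); moreover F = ⋃_{|w|=k} σ̃_w(F_k) for each k. -/

import Mathlib

open Set

/-- The space of infinite tails of the multivariable dynamical system `(X, σ)`:
pairs of sequences `(𝐢, 𝐱)` with `σ_{i k}(x_{k+1}) = x_k` for all `k`. -/
def Tails {n : ℕ} {X : Type*} (σ : Fin n → X → X) :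
    Set ((ℕ → Fin n) × (ℕ → X)) :=
  {p | ∀ k, σ (p.1 k) (p.2 (k + 1)) = p.2 k}

/-- Prepend an element to a sequence. -/
def prepend {α : Type*} (a : α) (s : ℕ → α) : ℕ → α
  | 0 => a
  | k + 1 => s k

/-- The lifted map `σ̃ᵢ(𝐢,𝐱) = (i𝐢, (σᵢ(x₀), 𝐱))` on the ambient product space. -/
def tildeσ {n : ℕ} {X : Type*} (σ : Fin n → X → X) (i : Fin n)
    (p : (ℕ → Fin n) × (ℕ → X)) : (ℕ → Fin n) × (ℕ → X) :=
  (prepend i p.1, prepend (σ i (p.2 0)) p.2)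

/-- The shift map `τ(𝐢,𝐱) = ((i₁,i₂,…),(x₁,x₂,…))`. -/
def tau {n : ℕ} {X : Type*} (p : (ℕ → Fin n) × (ℕ → X)) :
    (ℕ → Fin n) × (ℕ → X) :=
  (fun k => p.1 (k + 1), fun k => p.2 (k + 1))

/-- For a word `w = i₁…i_k`, the map `σ̃_w = σ̃_{i₁} ∘ ⋯ ∘ σ̃_{i_k}`. -/
def tildeσW {n : ℕ} {X : Type*} (σ : Fin n → X → X) (w : List (Fin n)) :
    (ℕ → Fin n) × (ℕ → X) → (ℕ → Fin n) × (ℕ → X) :=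
  w.foldr (fun i f => tildeσ σ i ∘ f) id

/-- A set `F ⊆ X̃` is robust if it contains `σ̃_w(τ^{|w|}(x))` for every
`x ∈ F` and every word `w`. -/
def Robust {n : ℕ} {X : Type*} (σ : Fin n → X → X)
    (F : Set ((ℕ → Fin n) × (ℕ → X))) : Prop :=
  ∀ x ∈ F, ∀ w : List (Fin n), tildeσW σ w (tau^[w.length] x) ∈ F

lemma tau_tildeσ {n : ℕ} {X : Type*} (σ : Fin n → X → X) (i : Fin n)
    (p : (ℕ → Fin n) × (ℕ → X)) : tau (tildeσ σ i p) = p := by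
  unfold tau tildeσ
  ext k <;> rfl

lemma tildeσW_cons {n : ℕ} {X : Type*} (σ : Fin n → X → X) (a : Fin n)
    (l : List (Fin n)) (p) : tildeσW σ (a :: l) p = tildeσ σ a (tildeσW σ l p) := rfl

lemma tau_iter_tildeσW {n : ℕ} {X : Type*} (σ : Fin n → X → X) (w : List (Fin n))
    (p : (ℕ → Fin n) × (ℕ → X)) : tau^[w.length] (tildeσW σ w p) = p := by
  induction w with
  | nil => rfl
  | cons a l ih =>
    rw [tildeσW_cons, List.length_cons, Function.iterate_succ_apply, tau_tildeσ, ih]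

lemma tildeσW_append {n : ℕ} {X : Type*} (σ : Fin n → X → X) (v w : List (Fin n))
    (p : (ℕ → Fin n) × (ℕ → X)) :
    tildeσW σ (v ++ w) p = tildeσW σ v (tildeσW σ w p) := by
  induction v with
  | nil => rfl
  | cons a l ih => rw [List.cons_append, tildeσW_cons, tildeσW_cons, ih]

lemma tau_mem_tails {n : ℕ} {X : Type*} {σ : Fin n → X → X}
    {p : (ℕ → Fin n) × (ℕ → X)} (h : p ∈ Tails σ) : tau p ∈ Tails σ :=
  fun k => h (k + 1)

lemma tau_iter_mem_tails {n : ℕ} {X : Type*} {σ : Fin n → X → X}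
    {p : (ℕ → Fin n) × (ℕ → X)} (h : p ∈ Tails σ) (k : ℕ) : tau^[k] p ∈ Tails σ := by
  induction k with
  | zero => exact h
  | succ m ih => rw [Function.iterate_succ_apply']; exact tau_mem_tails ih

lemma tildeσ_tau {n : ℕ} {X : Type*} {σ : Fin n → X → X}
    {p : (ℕ → Fin n) × (ℕ → X)} (h : p ∈ Tails σ) :
    tildeσ σ (p.1 0) (tau p) = p := by
  unfold tildeσ tau
  refine Prod.ext ?_ ?_ <;> funext k <;> cases k with
  | zero => first | rfl | exact h 0
  | succ m => rfl

lemma word_recover {n : ℕ} {X : Type*} {σ : Fin n → X → X} (k : ℕ) :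
    ∀ {p : (ℕ → Fin n) × (ℕ → X)}, p ∈ Tails σ →
    tildeσW σ (List.ofFn fun j : Fin k => p.1 j) (tau^[k] p) = p := by
  induction k with
  | zero => intro p _; rfl
  | succ m ih =>
    intro p hp
    have h1 : (List.ofFn fun j : Fin (m + 1) => p.1 j)
        = p.1 0 :: List.ofFn (fun j : Fin m => (tau p).1 j) := by
      rw [List.ofFn_succ]
      rfl
    rw [h1, tildeσW_cons, Function.iterate_succ_apply, ih (tau_mem_tails hp),
      tildeσ_tau hp]

lemma tau_iter_image_subset {n : ℕ} {X : Type*} {σ : Fin n → X → X}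
    {F : Set ((ℕ → Fin n) × (ℕ → X))} (hFtau : tau '' F ⊆ F) (k : ℕ) :
    tau^[k] '' F ⊆ F := by
  induction k with
  | zero => simp
  | succ m ih =>
    rw [Function.iterate_succ', Set.image_comp]
    exact fun x hx => hFtau (Set.image_mono ih hx)

/-- If `F ⊆ X̃` is a closed invariant set that is robust and `τ`-invariant,
and `F_k = τ^k(F)`, then each `F_k` is robust and satisfies
`F_k = ⋃ᵢ σ̃ᵢ(F_{k+1})` and `F_{k+1} = τ(F_k)`; moreover
`F = ⋃_{|w|=k} σ̃_w(F_k)` for each `k`. -/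
theorem stmt_19 {n : ℕ} {X : Type*} [TopologicalSpace X] [T2Space X]
    [LocallyCompactSpace X] (σ : Fin n → X → X) (hσ : ∀ i, Continuous (σ i))
    (hsurj : ∀ x : X, ∃ i y, σ i y = x)
    (F : Set ((ℕ → Fin n) × (ℕ → X))) (hF : F ⊆ Tails σ) (hFcl : IsClosed F)
    (hFinv : ∀ i, tildeσ σ i '' F ⊆ F) (hFrob : Robust σ F)
    (hFtau : tau '' F ⊆ F) :
    ∀ k : ℕ, Robust σ (tau^[k] '' F) ∧
      tau^[k] '' F = (⋃ i, tildeσ σ i '' (tau^[k + 1] '' F)) ∧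
      tau^[k + 1] '' F = tau '' (tau^[k] '' F) ∧
      F = ⋃ w ∈ {w : List (Fin n) | w.length = k},
        tildeσW σ w '' (tau^[k] '' F) := by
  intro k
  have hrob : Robust σ (tau^[k] '' F) := by
    rintro x ⟨y, hy, rfl⟩ w
    set v : List (Fin n) := List.ofFn fun j : Fin k => y.1 j with hv
    have hvl : v.length = k := by simp [hv]
    refine ⟨tildeσW σ (v ++ w) (tau^[(v ++ w).length] y), hFrob y hy (v ++ w), ?_⟩
    rw [tildeσW_append]
    have h2 : tau^[k] (tildeσW σ v (tildeσW σ w (tau^[(v ++ w).length] y)))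
        = tildeσW σ w (tau^[(v ++ w).length] y) := by
      rw [← hvl, tau_iter_tildeσW]
    rw [h2, List.length_append, hvl, ← Function.iterate_add_apply,
      Nat.add_comm w.length k]
  refine ⟨hrob, ?_, ?_, ?_⟩
  · ext x
    constructor
    · rintro ⟨y, hy, rfl⟩
      have htail : tau^[k] y ∈ Tails σ := tau_iter_mem_tails (hF hy) k
      refine Set.mem_iUnion.2 ⟨(tau^[k] y).1 0, ⟨tau^[k+1] y, ⟨y, hy, rfl⟩, ?_⟩⟩
      rw [Function.iterate_succ_apply', tildeσ_tau htail]
    · rintro hx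
      obtain ⟨i, x', ⟨y, hy, rfl⟩, rfl⟩ := Set.mem_iUnion.1 hx
      have := hrob (tau^[k] y) ⟨y, hy, rfl⟩ [i]
      simpa [tildeσW_cons, tildeσW, Function.iterate_succ_apply'] using this
  · rw [Function.iterate_succ', Set.image_comp]
  · ext y
    constructor
    · intro hy
      refine Set.mem_biUnion (by simp : (List.ofFn fun j : Fin k => y.1 j)
        ∈ {w : List (Fin n) | w.length = k}) ?_
      exact ⟨tau^[k] y, ⟨y, hy, rfl⟩, word_recover k (hF hy)⟩
    · intro hy
      obtain ⟨w, hw, x, ⟨z, hz, rfl⟩, rfl⟩ := Set.mem_iUnion₂.1 hy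
      rw [← hw]
      exact hFrob z hz w
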